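/- Let X be an integrable real random variable on a probability space, let β ∈ (0,1), let ε > 0, and let t ∈ ℝ. Then the smoothed Rockafellar–Uryasev functional satisfies 0 ≤ R^ε_{t,β}[X] − R_{t,β}[X] ≤ ε·log 2/(1 − β), where R_{t,β}[X] = t + (1−β)^{−1}·E[(X − t)_+] and R^ε_{t,β}[X] = t + (1−β)^{−1}·E[g_ε(X − t)]. -/

import Mathlib

open MeasureTheory

lemma gε_lb (ε : ℝ) (hε : 0 < ε) (x : ℝ) :
    max x 0 ≤ ε * Real.log (1 + Real.exp (x / ε)) := by
  have hpos : (0:ℝ) < 1 + Real.exp (x / ε) := by positivity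
  refine max_le ?_ ?_
  · have h : x / ε ≤ Real.log (1 + Real.exp (x / ε)) := by
      rw [Real.le_log_iff_exp_le hpos]
      nlinarith [Real.exp_pos (x / ε)]
    calc x = ε * (x / ε) := by field_simp
    _ ≤ ε * Real.log (1 + Real.exp (x / ε)) := by
        exact mul_le_mul_of_nonneg_left h hε.le
  · have : 0 ≤ Real.log (1 + Real.exp (x / ε)) :=
      Real.log_nonneg (by nlinarith [Real.exp_pos (x / ε)])
    positivity

lemma gε_ub (ε : ℝ) (hε : 0 < ε) (x : ℝ) :
    ε * Real.log (1 + Real.exp (x / ε)) ≤ max x 0 + ε * Real.log 2 := by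
  have h1 : 1 + Real.exp (x / ε) ≤ 2 * Real.exp (max x 0 / ε) := by
    have h2 : (1:ℝ) ≤ Real.exp (max x 0 / ε) := by
      rw [Real.one_le_exp_iff]
      positivity
    have h3 : Real.exp (x / ε) ≤ Real.exp (max x 0 / ε) :=
      Real.exp_le_exp.2 (by gcongr; exact le_max_left _ _)
    linarith
  have hpos : (0:ℝ) < 1 + Real.exp (x / ε) := by positivity
  have hlog : Real.log (1 + Real.exp (x / ε)) ≤ Real.log 2 + max x 0 / ε := by
    calc Real.log (1 + Real.exp (x / ε)) ≤ Real.log (2 * Real.exp (max x 0 / ε)) :=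
          Real.log_le_log hpos h1
    _ = Real.log 2 + max x 0 / ε := by
        rw [Real.log_mul (by norm_num) (Real.exp_pos _).ne', Real.log_exp]
  calc ε * Real.log (1 + Real.exp (x / ε)) ≤ ε * (Real.log 2 + max x 0 / ε) :=
        mul_le_mul_of_nonneg_left hlog hε.le
  _ = max x 0 + ε * Real.log 2 := by field_simp; ring

theorem smoothed_RU_functional_bias {Ω : Type*} [MeasurableSpace Ω]
    (μ : Measure Ω) [IsProbabilityMeasure μ] (X : Ω → ℝ) (hX : Integrable X μ)
    (β : ℝ) (hβ : β ∈ Set.Ioo (0 : ℝ) 1) (ε : ℝ) (hε : 0 < ε) (t : ℝ) :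
    0 ≤ (t + (1 - β)⁻¹ * ∫ ω, ε * Real.log (1 + Real.exp ((X ω - t) / ε)) ∂μ)
        - (t + (1 - β)⁻¹ * ∫ ω, max (X ω - t) 0 ∂μ) ∧
    (t + (1 - β)⁻¹ * ∫ ω, ε * Real.log (1 + Real.exp ((X ω - t) / ε)) ∂μ)
        - (t + (1 - β)⁻¹ * ∫ ω, max (X ω - t) 0 ∂μ) ≤ ε * Real.log 2 / (1 - β) := by
  obtain ⟨hβ0, hβ1⟩ := hβ
  have h1β : 0 < 1 - β := by linarith
  have hinv : 0 < (1 - β)⁻¹ := inv_pos.2 h1β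
  have hint_max : Integrable (fun ω => max (X ω - t) 0) μ :=
    (hX.sub (integrable_const t)).pos_part
  have hcont : Continuous (fun x : ℝ => ε * Real.log (1 + Real.exp ((x - t) / ε))) := by
    have : ∀ x : ℝ, (0:ℝ) < 1 + Real.exp ((x - t) / ε) := fun x => by positivity
    fun_prop (disch := intro x; positivity)
  have hmeas : AEStronglyMeasurable
      (fun ω => ε * Real.log (1 + Real.exp ((X ω - t) / ε))) μ :=
    hcont.comp_aestronglyMeasurable hX.1
  have hbd : Integrable (fun ω => max (X ω - t) 0 + ε * Real.log 2) μ :=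
    hint_max.add (integrable_const _)
  have hint_g : Integrable (fun ω => ε * Real.log (1 + Real.exp ((X ω - t) / ε))) μ := by
    refine hbd.mono' hmeas (Filter.Eventually.of_forall fun ω => ?_)
    rw [Real.norm_eq_abs, abs_of_nonneg (le_trans (le_max_right _ _) (gε_lb ε hε _))]
    exact gε_ub ε hε _
  have hA : ∫ ω, max (X ω - t) 0 ∂μ ≤ ∫ ω, ε * Real.log (1 + Real.exp ((X ω - t) / ε)) ∂μ :=
    integral_mono hint_max hint_g fun ω => gε_lb ε hε _
  have hB : ∫ ω, ε * Real.log (1 + Real.exp ((X ω - t) / ε)) ∂μ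
      ≤ (∫ ω, max (X ω - t) 0 ∂μ) + ε * Real.log 2 := by
    calc ∫ ω, ε * Real.log (1 + Real.exp ((X ω - t) / ε)) ∂μ
        ≤ ∫ ω, (max (X ω - t) 0 + ε * Real.log 2) ∂μ :=
          integral_mono hint_g hbd fun ω => gε_ub ε hε _
    _ = (∫ ω, max (X ω - t) 0 ∂μ) + ε * Real.log 2 := by
        rw [integral_add hint_max (integrable_const _), integral_const]
        simp
  constructor
  · nlinarith [mul_le_mul_of_nonneg_left hA hinv.le]
  · have := mul_le_mul_of_nonneg_left hB hinv.le
    have hdiv : ε * Real.log 2 / (1 - β) = (1 - β)⁻¹ * (ε * Real.log 2) := by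
      rw [div_eq_mul_inv]; ring
    nlinarith
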